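/- Let c > 0, Δ > 0, M ≥ 1. Define g(x) = log((x − Δ)/x) + cΔ/(3·x·(x − Δ)) for x > Δ, let x* > Δ be such that g(x*) = 0, g > 0 on (Δ, x*), and g < 0 on (x*, ∞), and let θ satisfy Δ < θ ≤ x*. Consider a probability space carrying a uniform random bit S ∈ {0, 1} and Z_1, …, Z_M with S, Z_1, …, Z_M mutually independent and each Z_m with law ν_c; set Y_m = Δ·S + Z_m. Define the ML detector Ŝ_ML(Y) = 1 if Y_m > Δ for all m and ∑_m g(Y_m) ≤ 0, and Ŝ_ML(Y) = 0 otherwise; define the first-arrival detector Ŝ_FA(Y) = 1 if min_m Y_m ≥ θ, else 0. Then the mismatch probability satisfies P( Ŝ_ML ≠ Ŝ_FA ) ≤ (1/2)·[ Ψ(c, M, x*) − Ψ(c, M, Δ) + Ψ(c, M, x* − Δ) ], where Ψ(c, M, t) = 1 − (1 − erfc(√(c/(2t))))^M for t > 0 and Ψ(c, M, t) = 0 for t ≤ 0. -/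

import Mathlib

open MeasureTheory ProbabilityTheory
open scoped Classical ENNReal

/-- The Lévy density with location 0 and scale `c`. -/
noncomputable def levyDensity (c z : ℝ) : ℝ :=
  if 0 < z then Real.sqrt (c / (2 * Real.pi * z ^ 3)) * Real.exp (-c / (2 * z)) else 0

/-- The Lévy distribution with location 0 and scale `c`, as a measure on `ℝ`. -/
noncomputable def levyMeasure (c : ℝ) : Measure ℝ :=
  volume.withDensity fun z => ENNReal.ofReal (levyDensity c z)

/-- The complementary error function `erfc x = (2/√π) ∫_x^∞ exp(−u²) du`. -/
noncomputable def erfc (x : ℝ) : ℝ :=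
  (2 / Real.sqrt Real.pi) * ∫ u in Set.Ioi x, Real.exp (-u ^ 2)

/-- The per-sample log-likelihood-ratio of the `M`-particle ML detector. -/
noncomputable def gLLR (c Δ x : ℝ) : ℝ :=
  Real.log ((x - Δ) / x) + c * Δ / (3 * x * (x - Δ))

/-- `Ψ(c, M, t)`: the CDF, at `t`, of the minimum of `M` i.i.d. Lévy variables. -/
noncomputable def Psi (c : ℝ) (M : ℕ) (t : ℝ) : ℝ :=
  if 0 < t then 1 - (1 - erfc (Real.sqrt (c / (2 * t)))) ^ M else 0

section ErfcLemmas

open Set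

lemma gauss_integrable : Integrable (fun u : ℝ => Real.exp (-u ^ 2)) := by
  have := integrable_exp_neg_mul_sq (b := 1) one_pos
  simpa using this

lemma gauss_Ioi_split (x : ℝ) :
    (∫ u in Set.Ioi x, Real.exp (-u ^ 2))
      = (∫ u in Set.Ioi (0:ℝ), Real.exp (-u ^ 2)) - ∫ u in (0:ℝ)..x, Real.exp (-u ^ 2) := by
  rcases le_or_gt 0 x with h | h
  · rw [intervalIntegral.integral_of_le h, eq_sub_iff_add_eq, add_comm,
      ← setIntegral_union (Set.Ioc_disjoint_Ioi le_rfl) measurableSet_Ioi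
        gauss_integrable.integrableOn gauss_integrable.integrableOn,
      Set.Ioc_union_Ioi_eq_Ioi h]
  · rw [intervalIntegral.integral_symm, intervalIntegral.integral_of_le h.le, sub_neg_eq_add,
      add_comm, ← setIntegral_union (Set.Ioc_disjoint_Ioi le_rfl) measurableSet_Ioi
        gauss_integrable.integrableOn gauss_integrable.integrableOn,
      Set.Ioc_union_Ioi_eq_Ioi h.le]

lemma erfc_hasDerivAt (x : ℝ) :
    HasDerivAt erfc (-(2 / Real.sqrt Real.pi) * Real.exp (-x ^ 2)) x := by
  have h1 : HasDerivAt (fun y : ℝ => ∫ u in (0:ℝ)..y, Real.exp (-u ^ 2))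
      (Real.exp (-x ^ 2)) x := by
    refine intervalIntegral.integral_hasDerivAt_right
      gauss_integrable.intervalIntegrable ?_ ?_
    · exact (Real.continuous_exp.comp
        (continuous_pow 2).neg).aestronglyMeasurable.stronglyMeasurableAtFilter
    · exact (Real.continuous_exp.comp (continuous_pow 2).neg).continuousAt
  have h2 : HasDerivAt (fun y : ℝ => ∫ u in Set.Ioi y, Real.exp (-u ^ 2))
      (-Real.exp (-x ^ 2)) x := by
    have heq : (fun y : ℝ => ∫ u in Set.Ioi y, Real.exp (-u ^ 2))
        = fun y => (∫ u in Set.Ioi (0:ℝ), Real.exp (-u ^ 2))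
          - ∫ u in (0:ℝ)..y, Real.exp (-u ^ 2) := by
      funext y; exact gauss_Ioi_split y
    rw [heq]
    have h3 := (hasDerivAt_const x (∫ u in Set.Ioi (0:ℝ), Real.exp (-u ^ 2))).sub h1
    rw [zero_sub] at h3; exact h3
  have := h2.const_mul (2 / Real.sqrt Real.pi)
  have hfe : erfc = fun y => 2 / Real.sqrt Real.pi * ∫ u in Set.Ioi y, Real.exp (-u ^ 2) := by
    funext y; rfl
  rw [hfe]; refine this.congr_deriv (Eq.symm ?_); ring

lemma erfc_zero : erfc 0 = 1 := by
  have h : (∫ u in Set.Ioi (0:ℝ), Real.exp (-u ^ 2)) = Real.sqrt Real.pi / 2 := by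
    have := integral_gaussian_Ioi 1
    simpa using this
  have hpi : Real.sqrt Real.pi ≠ 0 := by positivity
  rw [erfc, h]
  field_simp

lemma erfc_nonneg (x : ℝ) : 0 ≤ erfc x := by
  have h1 : 0 ≤ ∫ u in Set.Ioi x, Real.exp (-u ^ 2) :=
    setIntegral_nonneg measurableSet_Ioi fun u _ => (Real.exp_pos _).le
  have h2 : (0:ℝ) ≤ 2 / Real.sqrt Real.pi := by positivity
  exact mul_nonneg h2 h1

lemma erfc_antitone : Antitone erfc := by
  intro a b hab
  have h2 : (0:ℝ) ≤ 2 / Real.sqrt Real.pi := by positivity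
  refine mul_le_mul_of_nonneg_left ?_ h2
  exact setIntegral_mono_set gauss_integrable.integrableOn
    (Filter.Eventually.of_forall fun u => (Real.exp_pos _).le)
    (Filter.Eventually.of_forall (Set.Ioi_subset_Ioi hab))

lemma levyCDF_hasDerivAt {c t : ℝ} (hc : 0 < c) (ht : 0 < t) :
    HasDerivAt (fun x => erfc (Real.sqrt (c / (2 * x)))) (levyDensity c t) t := by
  have ht0 : t ≠ 0 := ht.ne'
  have harg : HasDerivAt (fun x : ℝ => c / (2 * x)) (-(c / (2 * t ^ 2))) t := by
    have h := (hasDerivAt_inv ht0).const_mul (c / 2)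
    have heq : (fun x : ℝ => c / 2 * x⁻¹) = fun x : ℝ => c / (2 * x) := by
      funext x; rw [div_mul_eq_div_div_swap]; ring
    rw [heq] at h
    refine h.congr_deriv (Eq.symm ?_)
    ring
  have hargpos : 0 < c / (2 * t) := by positivity
  have hsq : HasDerivAt (fun x : ℝ => Real.sqrt (c / (2 * x)))
      (1 / (2 * Real.sqrt (c / (2 * t))) * -(c / (2 * t ^ 2))) t :=
    (Real.hasDerivAt_sqrt hargpos.ne').comp t harg
  have herfc := (erfc_hasDerivAt (Real.sqrt (c / (2 * t)))).comp t hsq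
  have hsqsq : Real.sqrt (c / (2 * t)) ^ 2 = c / (2 * t) := Real.sq_sqrt hargpos.le
  rw [hsqsq] at herfc
  refine herfc.congr_deriv (Eq.symm ?_)
  have hs0 : Real.sqrt (c / (2 * t)) ≠ 0 := by positivity
  have hp0 : Real.sqrt Real.pi ≠ 0 := by positivity
  have h1 : Real.sqrt (c / (2 * Real.pi * t ^ 3)) * Real.sqrt Real.pi * Real.sqrt (c / (2 * t))
      = c / (2 * t ^ 2) := by
    rw [← Real.sqrt_mul (by positivity), ← Real.sqrt_mul (by positivity)]
    have heq2 : c / (2 * Real.pi * t ^ 3) * Real.pi * (c / (2 * t)) = (c / (2 * t ^ 2)) ^ 2 := by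
      field_simp
    rw [heq2, Real.sqrt_sq (by positivity)]
  have hexp : -c / (2 * t) = -(c / (2 * t)) := by ring
  rw [levyDensity, if_pos ht, hexp]
  set R := Real.sqrt (c / (2 * Real.pi * t ^ 3)) with hR
  set p := Real.sqrt Real.pi with hp
  set s := Real.sqrt (c / (2 * t)) with hs
  rw [← h1]
  field_simp

lemma levyDensity_nonneg (c z : ℝ) : 0 ≤ levyDensity c z := by
  unfold levyDensity
  split
  · positivity
  · exact le_refl 0

lemma levyCDF_tendsto {c : ℝ} :
    Filter.Tendsto (fun x => erfc (Real.sqrt (c / (2 * x)))) Filter.atTop (nhds 1) := by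
  have h1 : Filter.Tendsto (fun x : ℝ => c / (2 * x)) Filter.atTop (nhds 0) := by
    exact Filter.Tendsto.const_div_atTop
      (Filter.tendsto_atTop_atTop_of_monotone (fun a b hab => by linarith)
        (fun b => ⟨max b 0, by
          have h1 := le_max_left b 0; have h2 := le_max_right b 0; linarith⟩)) c
  have h2 : Filter.Tendsto (fun x : ℝ => Real.sqrt (c / (2 * x))) Filter.atTop (nhds 0) := by
    have := (Real.continuous_sqrt.tendsto 0).comp h1
    simpa [Function.comp_def] using this
  have h3 : ContinuousAt erfc 0 := (erfc_hasDerivAt 0).continuousAt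
  have := h3.tendsto.comp h2
  rwa [erfc_zero] at this

lemma levy_integrableOn {c t : ℝ} (hc : 0 < c) (ht : 0 < t) :
    IntegrableOn (levyDensity c) (Set.Ioi t) :=
  integrableOn_Ioi_deriv_of_nonneg
    ((levyCDF_hasDerivAt hc ht).continuousAt.continuousWithinAt)
    (fun x hx => levyCDF_hasDerivAt hc (ht.trans hx))
    (fun x _ => levyDensity_nonneg c x) levyCDF_tendsto

lemma integral_levy_tail {c t : ℝ} (hc : 0 < c) (ht : 0 < t) :
    ∫ z in Set.Ioi t, levyDensity c z = 1 - erfc (Real.sqrt (c / (2 * t))) :=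
  integral_Ioi_of_hasDerivAt_of_nonneg
    ((levyCDF_hasDerivAt hc ht).continuousAt.continuousWithinAt)
    (fun x hx => levyCDF_hasDerivAt hc (ht.trans hx))
    (fun x _ => levyDensity_nonneg c x) levyCDF_tendsto

lemma levyMeasure_Ioi {c t : ℝ} (hc : 0 < c) (ht : 0 < t) :
    levyMeasure c (Set.Ioi t) = ENNReal.ofReal (1 - erfc (Real.sqrt (c / (2 * t)))) := by
  rw [levyMeasure, withDensity_apply _ measurableSet_Ioi,
    ← ofReal_integral_eq_lintegral_ofReal (levy_integrableOn hc ht)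
      (Filter.Eventually.of_forall fun z => levyDensity_nonneg c z),
    integral_levy_tail hc ht]

lemma one_sub_erfc_nonneg {c t : ℝ} (hc : 0 < c) (ht : 0 < t) :
    0 ≤ 1 - erfc (Real.sqrt (c / (2 * t))) := by
  rw [← integral_levy_tail hc ht]
  exact setIntegral_nonneg measurableSet_Ioi fun z _ => levyDensity_nonneg c z

end ErfcLemmas

/-- Upper bound on the probability that the ML and first-arrival detectors disagree,
for the `M`-particle binary DBMT channel with equiprobable symbols `0` and `Δ`. -/
theorem ML_FA_mismatch_bound (c Δ θ xs : ℝ) (hc : 0 < c) (hΔ : 0 < Δ)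
    (M : ℕ) (hM : 1 ≤ M)
    (hxs : Δ < xs) (hg0 : gLLR c Δ xs = 0)
    (hgpos : ∀ x : ℝ, Δ < x → x < xs → 0 < gLLR c Δ x)
    (hgneg : ∀ x : ℝ, xs < x → gLLR c Δ x < 0)
    (hθ : Δ < θ) (hθxs : θ ≤ xs)
    {Ω : Type*} [MeasurableSpace Ω] (μ : Measure Ω) [IsProbabilityMeasure μ]
    (S : Ω → ℝ) (Z : Fin M → Ω → ℝ)
    (hSmeas : Measurable S) (hZmeas : ∀ m, Measurable (Z m))
    (hS01 : ∀ ω, S ω = 0 ∨ S ω = 1) (hSunif : μ {ω | S ω = 1} = 1 / 2)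
    (hindep : iIndepFun (Fin.cons S Z : Fin (M + 1) → Ω → ℝ) μ)
    (hlaw : ∀ m, μ.map (Z m) = levyMeasure c) :
    μ {ω |
        (if (∀ m, Δ < Δ * S ω + Z m ω) ∧ (∑ m, gLLR c Δ (Δ * S ω + Z m ω)) ≤ 0
          then (1 : ℝ) else 0)
        ≠ (if θ ≤ ⨅ m, (Δ * S ω + Z m ω) then (1 : ℝ) else 0)}
      ≤ ENNReal.ofReal ((1 / 2) * (Psi c M xs - Psi c M Δ + Psi c M (xs - Δ))) := by
  haveI : Nonempty (Fin M) := ⟨⟨0, hM⟩⟩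
  have hxs0 : 0 < xs := hΔ.trans hxs
  have hxd0 : 0 < xs - Δ := sub_pos.mpr hxs
  -- abbreviations
  set F : ℝ → ℝ := fun t => erfc (Real.sqrt (c / (2 * t))) with hF
  set B : ℝ → Set Ω := fun t => ⋂ m, Z m ⁻¹' Set.Ioi t with hB
  have hBmeas : ∀ t, MeasurableSet (B t) :=
    fun t => MeasurableSet.iInter fun m => (hZmeas m) measurableSet_Ioi
  have hmemB : ∀ (t : ℝ) (ω : Ω), ω ∈ B t ↔ ∀ m, t < Z m ω := by
    intro t ω; simp [hB]
  have hS1 : MeasurableSet (S ⁻¹' ({1} : Set ℝ)) := hSmeas (measurableSet_singleton 1)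
  have hS1set : S ⁻¹' ({1} : Set ℝ) = {ω | S ω = 1} := by ext ω; simp
  have hS1half : μ (S ⁻¹' ({1} : Set ℝ)) = 1 / 2 := by rw [hS1set]; exact hSunif
  -- tail probability of each Z m
  have hZtail : ∀ (m : Fin M) (t : ℝ), 0 < t →
      μ (Z m ⁻¹' Set.Ioi t) = ENNReal.ofReal (1 - F t) := by
    intro m t ht
    rw [← Measure.map_apply (hZmeas m) measurableSet_Ioi, hlaw m, levyMeasure_Ioi hc ht]
  -- independence: product formula
  have hkey : ∀ (A0 : Set ℝ), MeasurableSet A0 → ∀ t : ℝ,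
      μ (S ⁻¹' A0 ∩ B t) = μ (S ⁻¹' A0) * ∏ m, μ (Z m ⁻¹' Set.Ioi t) := by
    intro A0 hA0 t
    have hmeas : ∀ i ∈ Finset.univ,
        MeasurableSet ((Fin.cons A0 fun _ => Set.Ioi t : Fin (M + 1) → Set ℝ) i) := by
      intro i _
      refine Fin.cases ?_ ?_ i
      · simpa using hA0
      · intro j; simpa using measurableSet_Ioi
    have h := hindep.measure_inter_preimage_eq_mul Finset.univ hmeas
    have hset : (⋂ i ∈ Finset.univ, (Fin.cons S Z : Fin (M + 1) → Ω → ℝ) i ⁻¹'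
          ((Fin.cons A0 fun _ => Set.Ioi t : Fin (M + 1) → Set ℝ) i))
        = S ⁻¹' A0 ∩ B t := by
      ext ω
      simp only [Set.mem_iInter, Finset.mem_univ, forall_true_left, Set.mem_inter_iff,
        Set.mem_preimage, hB, Fin.forall_fin_succ, Fin.cons_zero, Fin.cons_succ]
    have hprod : (∏ i, μ ((Fin.cons S Z : Fin (M + 1) → Ω → ℝ) i ⁻¹'
          ((Fin.cons A0 fun _ => Set.Ioi t : Fin (M + 1) → Set ℝ) i)))
        = μ (S ⁻¹' A0) * ∏ m, μ (Z m ⁻¹' Set.Ioi t) := by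
      rw [Fin.prod_univ_succ]
      simp only [Fin.cons_zero, Fin.cons_succ]
    rw [hset, hprod] at h
    exact h
  have hprodq : ∀ t : ℝ, 0 < t →
      (∏ m : Fin M, μ (Z m ⁻¹' Set.Ioi t)) = ENNReal.ofReal ((1 - F t) ^ M) := by
    intro t ht
    have : (∏ m : Fin M, μ (Z m ⁻¹' Set.Ioi t)) = ENNReal.ofReal (1 - F t) ^ M := by
      rw [Finset.prod_congr rfl fun m _ => hZtail m t ht, Finset.prod_const,
        Finset.card_univ, Fintype.card_fin]
    rw [this, ← ENNReal.ofReal_pow (one_sub_erfc_nonneg hc ht)]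
  -- measures of the relevant events
  have hSB1 : ∀ t : ℝ, 0 < t →
      μ (S ⁻¹' ({1} : Set ℝ) ∩ B t) = 1 / 2 * ENNReal.ofReal ((1 - F t) ^ M) := by
    intro t ht
    rw [hkey _ (measurableSet_singleton 1) t, hS1half, hprodq t ht]
  have hSB0 : ∀ t : ℝ, 0 < t →
      μ ((S ⁻¹' ({1} : Set ℝ))ᶜ ∩ B t) = 1 / 2 * ENNReal.ofReal ((1 - F t) ^ M) := by
    intro t ht
    have hc1 : (S ⁻¹' ({1} : Set ℝ))ᶜ = S ⁻¹' (({1} : Set ℝ)ᶜ) := rfl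
    rw [hc1, hkey _ (measurableSet_singleton 1).compl t, ← hc1,
      prob_compl_eq_one_sub hS1, hS1half, hprodq t ht]
    norm_num
  -- the two bounding events
  set X : Set Ω := (S ⁻¹' ({1} : Set ℝ))ᶜ ∩ (B Δ \ B xs) with hX
  set Y : Set Ω := S ⁻¹' ({1} : Set ℝ) ∩ (B (xs - Δ))ᶜ with hY
  -- pointwise inclusion
  have hsubset : {ω |
        (if (∀ m, Δ < Δ * S ω + Z m ω) ∧ (∑ m, gLLR c Δ (Δ * S ω + Z m ω)) ≤ 0
          then (1 : ℝ) else 0)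
        ≠ (if θ ≤ ⨅ m, (Δ * S ω + Z m ω) then (1 : ℝ) else 0)} ⊆ X ∪ Y := by
    intro ω hω
    by_contra hU
    rw [Set.mem_union] at hU
    push_neg at hU
    obtain ⟨hUX, hUY⟩ := hU
    apply hω
    have hbdd : BddBelow (Set.range fun m => Δ * S ω + Z m ω) :=
      (Set.finite_range _).bddBelow
    rcases hS01 ω with hs0 | hs1
    · -- S ω = 0
      have hnotin : ω ∈ (S ⁻¹' ({1} : Set ℝ))ᶜ := by
        simp only [Set.mem_compl_iff, Set.mem_preimage, Set.mem_singleton_iff]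
        rw [hs0]; norm_num
      have hnot : ω ∉ B Δ \ B xs := fun hmem => hUX ⟨hnotin, hmem⟩
      simp only [hs0, mul_zero, zero_add]
      rw [Set.mem_diff] at hnot
      push_neg at hnot
      by_cases hBΔ : ω ∈ B Δ
      · -- then ω ∈ B xs : all Z m ω > xs, both detectors say 1
        have hBxs := (hmemB xs ω).mp (hnot hBΔ)
        have hML : (∀ m, Δ < Z m ω) ∧ (∑ m, gLLR c Δ (Z m ω)) ≤ 0 := by
          refine ⟨fun m => hxs.trans (hBxs m), Finset.sum_nonpos fun m _ =>
            (hgneg _ (hBxs m)).le⟩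
        have hFA : θ ≤ ⨅ m, Z m ω :=
          le_ciInf fun m => hθxs.trans (hBxs m).le
        rw [if_pos hML, if_pos hFA]
      · -- some Z m ω ≤ Δ : both detectors say 0
        rw [hmemB Δ ω] at hBΔ
        push_neg at hBΔ
        obtain ⟨m₀, hm₀⟩ := hBΔ
        have hML : ¬((∀ m, Δ < Z m ω) ∧ (∑ m, gLLR c Δ (Z m ω)) ≤ 0) := by
          intro h
          exact absurd (h.1 m₀) (not_lt.mpr hm₀)
        have hFA : ¬(θ ≤ ⨅ m, Z m ω) := by
          intro h
          have h1 : (⨅ m, Z m ω) ≤ Z m₀ ω := ciInf_le ((Set.finite_range _).bddBelow) m₀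
          linarith
        rw [if_neg hML, if_neg hFA]
    · -- S ω = 1
      have hin : ω ∈ S ⁻¹' ({1} : Set ℝ) := by
        simp only [Set.mem_preimage, Set.mem_singleton_iff]; exact hs1
      have hBin : ω ∈ B (xs - Δ) := by
        by_contra hnotB
        exact hUY ⟨hin, hnotB⟩
      rw [hmemB _ ω] at hBin
      simp only [hs1, mul_one]
      have hgt : ∀ m, xs < Δ + Z m ω := fun m => by have := hBin m; linarith
      have hML : (∀ m, Δ < Δ + Z m ω) ∧ (∑ m, gLLR c Δ (Δ + Z m ω)) ≤ 0 := by
        refine ⟨fun m => hxs.trans (hgt m), Finset.sum_nonpos fun m _ =>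
          (hgneg _ (hgt m)).le⟩
      have hFA : θ ≤ ⨅ m, (Δ + Z m ω) :=
        le_ciInf fun m => hθxs.trans (hgt m).le
      rw [if_pos hML, if_pos hFA]
  -- measure of X
  have hBsub : B xs ⊆ B Δ := Set.iInter_mono fun m =>
    Set.preimage_mono (Set.Ioi_subset_Ioi hxs.le)
  have hXmeas : μ X = 1 / 2 * ENNReal.ofReal ((1 - F Δ) ^ M)
      - 1 / 2 * ENNReal.ofReal ((1 - F xs) ^ M) := by
    have hXeq : X = ((S ⁻¹' ({1} : Set ℝ))ᶜ ∩ B Δ) \ ((S ⁻¹' ({1} : Set ℝ))ᶜ ∩ B xs) := by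
      rw [hX]
      ext ω
      simp only [Set.mem_inter_iff, Set.mem_diff, Set.mem_compl_iff]
      tauto
    rw [hXeq, measure_diff (Set.inter_subset_inter_right _ hBsub)
      (hS1.compl.inter (hBmeas xs)).nullMeasurableSet (measure_ne_top μ _),
      hSB0 Δ hΔ, hSB0 xs hxs0]
  -- measure of Y
  have hYmeas : μ Y = 1 / 2 - 1 / 2 * ENNReal.ofReal ((1 - F (xs - Δ)) ^ M) := by
    have hYeq : Y = S ⁻¹' ({1} : Set ℝ) \ (S ⁻¹' ({1} : Set ℝ) ∩ B (xs - Δ)) := by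
      rw [hY]
      ext ω
      simp only [Set.mem_inter_iff, Set.mem_diff, Set.mem_compl_iff]
      tauto
    rw [hYeq, measure_diff Set.inter_subset_left
      (hS1.inter (hBmeas _)).nullMeasurableSet (measure_ne_top μ _),
      hSB1 _ hxd0, hS1half]
  -- put everything together
  have hbound := (measure_mono hsubset).trans (measure_union_le (μ := μ) X Y)
  rw [hXmeas, hYmeas] at hbound
  refine hbound.trans (le_of_eq ?_)
  -- now pure ENNReal/real arithmetic
  have hmono : F Δ ≤ F xs := by
    apply erfc_antitone
    apply Real.sqrt_le_sqrt
    exact div_le_div_of_nonneg_left hc.le (by positivity) (by linarith)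
  have h01 : ∀ t : ℝ, 0 < t → 0 ≤ 1 - F t ∧ 1 - F t ≤ 1 := fun t ht =>
    ⟨one_sub_erfc_nonneg hc ht, by have := erfc_nonneg (Real.sqrt (c / (2 * t))); linarith⟩
  have hhalf : (1 / 2 : ℝ≥0∞) = ENNReal.ofReal (1 / 2) := by
    rw [ENNReal.ofReal_div_of_pos (by norm_num)]
    norm_num
  have hofmul : ∀ x : ℝ, (1 / 2 : ℝ≥0∞) * ENNReal.ofReal x = ENNReal.ofReal (1 / 2 * x) := by
    intro x
    rw [ENNReal.ofReal_mul (by norm_num : (0:ℝ) ≤ 1/2), hhalf]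
  have hpowmono : (1 - F xs) ^ M ≤ (1 - F Δ) ^ M :=
    pow_le_pow_left₀ (h01 xs hxs0).1 (by linarith) M
  have hpowle1 : (1 - F (xs - Δ)) ^ M ≤ 1 :=
    pow_le_one₀ (h01 _ hxd0).1 (h01 _ hxd0).2
  rw [hofmul, hofmul, hofmul, hhalf,
    ← ENNReal.ofReal_sub _ (mul_nonneg (by norm_num) (pow_nonneg (h01 xs hxs0).1 M)),
    ← ENNReal.ofReal_sub _ (mul_nonneg (by norm_num) (pow_nonneg (h01 _ hxd0).1 M)),
    ← ENNReal.ofReal_add (by nlinarith) (by nlinarith)]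
  congr 1
  rw [Psi, Psi, Psi, if_pos hxs0, if_pos hΔ, if_pos hxd0]
  ring
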